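/- Let K, ξ ∈ ℝ with K ≠ 0 and ξ² > K²/4. Set ω_K = √(ξ² − K²/4), μ = (ξ + ω_K)/2 and ν = (ξ − ω_K)/2. Then for every A₀ ∈ ℂ there exists a unique pair (C₁, C₂) ∈ ℂ × ℂ with i·μ·C₁ = (K/4)·conj(C₂), i·ν·C₂ = (K/4)·conj(C₁) and C₁ + C₂ = A₀; moreover A(T) = C₁·e^{iμT} + C₂·e^{iνT} is the unique solution of A'(T) = (K/4)·e^{iξT}·conj(A(T)) with A(0) = A₀. -/

import Mathlib

open Set Complex

lemma lip_aux (k : ℂ) (ξ t : ℝ) :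
    LipschitzWith ‖k‖₊ (fun z : ℂ => k * Complex.exp (Complex.I * (ξ:ℂ) * (t:ℂ)) * (starRingEnd ℂ) z) := by
  apply LipschitzWith.of_dist_le_mul
  intro x y
  have h1 : ‖Complex.exp (Complex.I * (ξ:ℂ) * (t:ℂ))‖ = 1 := by
    rw [Complex.norm_exp]
    simp [Complex.mul_re, Complex.mul_im]
  rw [dist_eq_norm, dist_eq_norm, ← mul_sub, ← map_sub, norm_mul, norm_mul, h1, mul_one]
  simp [Complex.norm_conj]
  rw [← map_sub (starRingEnd ℂ) x y, Complex.norm_conj]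

lemma ode_unique_aux {v : ℝ → ℂ → ℂ} {L : NNReal} (hv : ∀ t, LipschitzWith L (v t))
    {f g : ℝ → ℂ} (hf : ∀ t, HasDerivAt f (v t (f t)) t)
    (hg : ∀ t, HasDerivAt g (v t (g t)) t) (h0 : f 0 = g 0) (T : ℝ) : f T = g T := by
  have h1 : (0:ℝ) ∈ Set.Ioo (-(|T|+1)) (|T|+1) := by
    constructor <;> nlinarith [abs_nonneg T]
  have hT : T ∈ Set.Icc (-(|T|+1)) (|T|+1) :=
    ⟨by nlinarith [neg_abs_le T], by nlinarith [le_abs_self T]⟩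
  exact ODE_solution_unique_of_mem_Icc (s := fun _ => Set.univ)
    (fun t _ => (hv t).lipschitzOnWith) h1
    (fun t _ => (hf t).continuousAt.continuousWithinAt)
    (fun t _ => hf t) (fun _ _ => trivial)
    (fun t _ => (hg t).continuousAt.continuousWithinAt)
    (fun t _ => hg t) (fun _ _ => trivial) h0 hT

lemma exp_deriv_aux (c a : ℂ) (T : ℝ) :
    HasDerivAt (fun s : ℝ => c * Complex.exp (Complex.I * a * (s:ℂ)))
      (Complex.I * a * c * Complex.exp (Complex.I * a * (T:ℂ))) T := by
  have h1 : HasDerivAt (fun s : ℝ => (s:ℂ)) 1 T := Complex.ofRealCLM.hasDerivAt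
  have h2 := (h1.const_mul (Complex.I * a)).cexp.const_mul c
  convert h2 using 1
  · rfl
  ring


/-- In Case 1 (ξ² > K²/4), for every initial value A₀ there is a unique
pair (C₁, C₂) with iμC₁ = (K/4)conj(C₂), iνC₂ = (K/4)conj(C₁), C₁ + C₂ = A₀, where
μ = (ξ+ω_K)/2, ν = (ξ−ω_K)/2, ω_K = √(ξ²−K²/4); and A(T) = C₁e^{iμT} + C₂e^{iνT} is
the unique solution of A' = (K/4)e^{iξT}conj(A) with A(0) = A₀. -/
theorem stmt_5 (K ξ : ℝ) (hK : K ≠ 0) (hξ : ξ ^ 2 > K ^ 2 / 4) (A₀ : ℂ) :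
    (∃! p : ℂ × ℂ,
      Complex.I * (((ξ + Real.sqrt (ξ ^ 2 - K ^ 2 / 4)) / 2 : ℝ) : ℂ) * p.1 =
          ((K : ℂ) / 4) * (starRingEnd ℂ) p.2 ∧
      Complex.I * (((ξ - Real.sqrt (ξ ^ 2 - K ^ 2 / 4)) / 2 : ℝ) : ℂ) * p.2 =
          ((K : ℂ) / 4) * (starRingEnd ℂ) p.1 ∧
      p.1 + p.2 = A₀)
    ∧
    (∀ C₁ C₂ : ℂ,
      Complex.I * (((ξ + Real.sqrt (ξ ^ 2 - K ^ 2 / 4)) / 2 : ℝ) : ℂ) * C₁ =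
          ((K : ℂ) / 4) * (starRingEnd ℂ) C₂ →
      Complex.I * (((ξ - Real.sqrt (ξ ^ 2 - K ^ 2 / 4)) / 2 : ℝ) : ℂ) * C₂ =
          ((K : ℂ) / 4) * (starRingEnd ℂ) C₁ →
      C₁ + C₂ = A₀ →
      ((∀ T : ℝ,
          HasDerivAt (fun s : ℝ =>
              C₁ * Complex.exp (Complex.I *
                  (((ξ + Real.sqrt (ξ ^ 2 - K ^ 2 / 4)) / 2 : ℝ) : ℂ) * (s : ℂ))
                + C₂ * Complex.exp (Complex.I *
                  (((ξ - Real.sqrt (ξ ^ 2 - K ^ 2 / 4)) / 2 : ℝ) : ℂ) * (s : ℂ)))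
            (((K : ℂ) / 4) * Complex.exp (Complex.I * (ξ : ℂ) * (T : ℂ)) *
              (starRingEnd ℂ)
                (C₁ * Complex.exp (Complex.I *
                    (((ξ + Real.sqrt (ξ ^ 2 - K ^ 2 / 4)) / 2 : ℝ) : ℂ) * (T : ℂ))
                  + C₂ * Complex.exp (Complex.I *
                    (((ξ - Real.sqrt (ξ ^ 2 - K ^ 2 / 4)) / 2 : ℝ) : ℂ) * (T : ℂ))))
            T)
        ∧
        (∀ B : ℝ → ℂ,
          (∀ T : ℝ, HasDerivAt B
            (((K : ℂ) / 4) * Complex.exp (Complex.I * (ξ : ℂ) * (T : ℂ)) *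
              (starRingEnd ℂ) (B T)) T) →
          B 0 = A₀ →
          ∀ T : ℝ, B T =
            C₁ * Complex.exp (Complex.I *
                (((ξ + Real.sqrt (ξ ^ 2 - K ^ 2 / 4)) / 2 : ℝ) : ℂ) * (T : ℂ))
              + C₂ * Complex.exp (Complex.I *
                (((ξ - Real.sqrt (ξ ^ 2 - K ^ 2 / 4)) / 2 : ℝ) : ℂ) * (T : ℂ))))) := by
  set w : ℝ := Real.sqrt (ξ ^ 2 - K ^ 2 / 4) with hwdef
  set μ : ℝ := (ξ + w) / 2 with hμdef
  set ν : ℝ := (ξ - w) / 2 with hνdef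
  have hw2 : w ^ 2 = ξ ^ 2 - K ^ 2 / 4 := Real.sq_sqrt (by linarith)
  have hwpos : 0 < w := Real.sqrt_pos.mpr (by linarith)
  have hμν : μ * ν = K ^ 2 / 16 := by
    rw [hμdef, hνdef]; linear_combination (-1/4 : ℝ) * hw2
  have hμ0 : μ ≠ 0 := by
    intro h; rw [h, zero_mul] at hμν; exact hK (by nlinarith)
  have hν0 : ν ≠ 0 := by
    intro h; rw [h, mul_zero] at hμν; exact hK (by nlinarith)
  have hμνne : μ ≠ ν := by rw [hμdef, hνdef]; intro h; nlinarith
  -- complex constants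
  set k : ℂ := (K : ℂ) / 4 with hkdef
  clear_value w μ ν
  have hk0 : k ≠ 0 := by
    rw [hkdef]; simp [Complex.ofReal_ne_zero, hK]
  have hMN : (μ : ℂ) * (ν : ℂ) = k ^ 2 := by
    rw [hkdef, ← Complex.ofReal_mul, hμν]; push_cast; ring
  have hden : ((μ : ℂ) - (ν : ℂ)) ≠ 0 := by
    rw [sub_ne_zero]; exact_mod_cast hμνne
  have hsum : (μ : ℂ) + (ν : ℂ) = (ξ : ℂ) := by
    rw [hμdef, hνdef]; push_cast; ring
  -- the distinguished pair
  set C1 : ℂ := -((ν : ℂ) * A₀ + Complex.I * k * (starRingEnd ℂ) A₀) / ((μ:ℂ) - (ν:ℂ)) with hC1def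
  set C2 : ℂ := A₀ - C1 with hC2def
  clear_value k C1 C2
  have hconjC1 : (starRingEnd ℂ) C1
      = -((ν : ℂ) * (starRingEnd ℂ) A₀ - Complex.I * k * A₀) / ((μ:ℂ) - (ν:ℂ)) := by
    rw [hC1def, hkdef]
    simp [map_div₀, Complex.conj_ofReal, map_ofNat]
    ring
  have e1 : Complex.I * (μ : ℂ) * C1 = k * (starRingEnd ℂ) C2 := by
    rw [hC2def, map_sub, hconjC1, hC1def]
    field_simp
    linear_combination (-Complex.I * A₀) * hMN + (-(μ:ℂ) * k * (starRingEnd ℂ) A₀) * Complex.I_sq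
  have e2 : Complex.I * (ν : ℂ) * C2 = k * (starRingEnd ℂ) C1 := by
    rw [hC2def, hconjC1, hC1def]
    field_simp
    linear_combination (Complex.I * A₀) * hMN + ((ν:ℂ) * k * (starRingEnd ℂ) A₀) * Complex.I_sq
  have e3 : C1 + C2 = A₀ := by rw [hC2def]; ring
  constructor
  · refine ⟨(C1, C2), ⟨e1, e2, e3⟩, ?_⟩
    rintro ⟨q1, q2⟩ ⟨f1, f2, f3⟩
    simp only at f1 f2 f3 ⊢
    have c3 : (starRingEnd ℂ) q1 + (starRingEnd ℂ) q2 = (starRingEnd ℂ) A₀ := by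
      rw [← map_add, f3]
    have hq1 : Complex.I * ((μ:ℂ) - (ν:ℂ)) * q1
        = k * (starRingEnd ℂ) A₀ - Complex.I * (ν:ℂ) * A₀ := by
      linear_combination f1 + f2 + k * c3 - Complex.I * (ν:ℂ) * f3
    have hq1' : q1 = C1 := by
      rw [hC1def, eq_div_iff hden]
      have hI2 := Complex.I_sq
      linear_combination (-Complex.I) * hq1 + ((ν:ℂ) * A₀ + ((μ:ℂ)-(ν:ℂ)) * q1) * hI2
    have hq2' : q2 = C2 := by rw [hC2def, ← f3, hq1']; ring
    exact Prod.ext hq1' hq2'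
  · intro C₁ C₂ h1 h2 h3
    have hsol : ∀ T : ℝ,
        HasDerivAt (fun s : ℝ =>
            C₁ * Complex.exp (Complex.I * (μ : ℂ) * (s : ℂ))
              + C₂ * Complex.exp (Complex.I * (ν : ℂ) * (s : ℂ)))
          (k * Complex.exp (Complex.I * (ξ : ℂ) * (T : ℂ)) *
            (starRingEnd ℂ)
              (C₁ * Complex.exp (Complex.I * (μ : ℂ) * (T : ℂ))
                + C₂ * Complex.exp (Complex.I * (ν : ℂ) * (T : ℂ)))) T := by
      intro T
      have hd := (exp_deriv_aux C₁ (μ:ℂ) T).add (exp_deriv_aux C₂ (ν:ℂ) T)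
      convert hd using 1
      · rfl
      · rfl
      have hce : ∀ a : ℝ, (starRingEnd ℂ) (Complex.exp (Complex.I * (a:ℂ) * (T:ℂ)))
          = Complex.exp (-(Complex.I * (a:ℂ) * (T:ℂ))) := by
        intro a
        rw [← Complex.exp_conj]
        congr 1
        simp [Complex.conj_ofReal]
      rw [map_add, map_mul, map_mul, hce, hce]
      have hexp1 : Complex.exp (Complex.I * (ξ:ℂ) * (T:ℂ)) *
          Complex.exp (-(Complex.I * (μ:ℂ) * (T:ℂ))) = Complex.exp (Complex.I * (ν:ℂ) * (T:ℂ)) := by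
        rw [← Complex.exp_add]; congr 1
        linear_combination (-(Complex.I * (T:ℂ))) * hsum
      have hexp2 : Complex.exp (Complex.I * (ξ:ℂ) * (T:ℂ)) *
          Complex.exp (-(Complex.I * (ν:ℂ) * (T:ℂ))) = Complex.exp (Complex.I * (μ:ℂ) * (T:ℂ)) := by
        rw [← Complex.exp_add]; congr 1
        linear_combination (-(Complex.I * (T:ℂ))) * hsum
      linear_combination (k * (starRingEnd ℂ) C₁) * hexp1 + (k * (starRingEnd ℂ) C₂) * hexp2
        - Complex.exp (Complex.I * (ν:ℂ) * (T:ℂ)) * h2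
        - Complex.exp (Complex.I * (μ:ℂ) * (T:ℂ)) * h1
    refine ⟨hsol, ?_⟩
    intro B hB hB0 T
    have hA0 : (fun s : ℝ =>
        C₁ * Complex.exp (Complex.I * (μ : ℂ) * (s : ℂ))
          + C₂ * Complex.exp (Complex.I * (ν : ℂ) * (s : ℂ))) 0 = A₀ := by
      simp [h3]
    exact ode_unique_aux (v := fun t z => k * Complex.exp (Complex.I * (ξ:ℂ) * (t:ℂ)) * (starRingEnd ℂ) z)
      (L := ‖k‖₊) (fun t => lip_aux k ξ t) hB hsol (hB0.trans hA0.symm) T
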